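/- Substituting x_i ↦ x_i + Σ_{j<i} a_{ij} x_j + b_i (a lower triangular affine change of variables) into a square-free monomial f ∈ M_m yields, in the ring R_m, a linear combination of monomials g with g ⪯ f; in particular, if I is a decreasing set containing f, the result lies in the span of {g : g ∈ I}. -/

import Mathlib

open MvPolynomial

/-- The partial order `⪯` on square-free monomials. -/
def preceq {m : ℕ} (S T : Finset (Fin m)) : Prop :=
  ∃ T' ⊆ T, T'.card = S.card ∧
    List.Forall₂ (· ≤ ·) (S.sort (· ≤ ·)) (T'.sort (· ≤ ·))

/-- A decreasing set of monomials. -/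
def Decreasing {m : ℕ} (I : Finset (Finset (Fin m))) : Prop :=
  ∀ f ∈ I, ∀ g, preceq g f → g ∈ I

/-- The ring `R_m = F_2[x_0,…,x_{m-1}]/(x_i^2 - x_i)`. -/
def Rring (m : ℕ) : Type :=
  MvPolynomial (Fin m) (ZMod 2) ⧸
    Ideal.span { P : MvPolynomial (Fin m) (ZMod 2) | ∃ i, P = X i ^ 2 - X i }

noncomputable instance (m : ℕ) : CommRing (Rring m) := Ideal.Quotient.commRing _
noncomputable instance (m : ℕ) : Algebra (ZMod 2) (Rring m) := Ideal.Quotient.algebra _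

/-- The class in `R_m` of a polynomial. -/
noncomputable def rmk {m : ℕ} (P : MvPolynomial (Fin m) (ZMod 2)) : Rring m :=
  Ideal.Quotient.mk _ P

/-- The lower triangular affine substitution
`x_i ↦ x_i + ∑_{j<i} a_{ij} x_j + b_i` applied to a polynomial. -/
noncomputable def ltaSubst {m : ℕ} (a : Fin m → Fin m → ZMod 2)
    (b : Fin m → ZMod 2) (P : MvPolynomial (Fin m) (ZMod 2)) :
    MvPolynomial (Fin m) (ZMod 2) :=
  aeval (fun i : Fin m =>
    X i + (∑ j ∈ Finset.univ.filter (fun j : Fin m => j < i), C (a i j) * X j)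
      + C (b i)) P

/- ### Auxiliary list lemmas -/

lemma forall2_trans {α : Type*} [Preorder α] :
    ∀ {A B C : List α}, List.Forall₂ (· ≤ ·) A B → List.Forall₂ (· ≤ ·) B C →
      List.Forall₂ (· ≤ ·) A C := by
  intro A B C h
  induction h generalizing C with
  | nil => intro h2; cases h2; exact List.Forall₂.nil
  | cons hab _ ih =>
    intro h2
    cases h2 with
    | cons hbc h2' => exact List.Forall₂.cons (le_trans hab hbc) (ih h2')

lemma forall2_shift {α : Type*} [Preorder α] {i : α} :
    ∀ (M : List α) (b : α), List.Pairwise (· ≤ ·) (b :: M) → (∀ x ∈ b :: M, x ≤ i) →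
      List.Forall₂ (· ≤ ·) (b :: M) (M ++ [i]) := by
  intro M
  induction M with
  | nil =>
    intro b _ hle
    exact List.Forall₂.cons (hle b (by simp)) List.Forall₂.nil
  | cons c M' ih =>
    intro b hs hle
    obtain ⟨h1, h2⟩ := List.pairwise_cons.1 hs
    refine List.Forall₂.cons (h1 c (by simp)) ?_
    exact ih c h2 (fun x hx => hle x (List.mem_cons_of_mem _ hx))

lemma forall2_orderedInsert {α : Type*} [LinearOrder α] {i j : α} (hj : j ≤ i) :
    ∀ {L M : List α}, List.Pairwise (· ≤ ·) M → List.Forall₂ (· ≤ ·) L M →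
      (∀ x ∈ M, x ≤ i) →
      List.Forall₂ (· ≤ ·) (L.orderedInsert (· ≤ ·) j) (M ++ [i]) := by
  intro L M hM h
  induction h with
  | nil =>
    intro _
    exact List.Forall₂.cons hj List.Forall₂.nil
  | @cons a b L' M' hab hF ih =>
    intro hle
    by_cases hja : j ≤ a
    · rw [List.orderedInsert, if_pos hja]
      refine List.Forall₂.cons (le_trans hja (le_trans hab (le_refl b))) ?_
      have h1 : List.Forall₂ (· ≤ ·) (a :: L') (b :: M') := List.Forall₂.cons hab hF
      exact forall2_trans h1 (forall2_shift M' b hM hle)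
    · rw [List.orderedInsert, if_neg hja]
      refine List.Forall₂.cons hab ?_
      exact ih (List.pairwise_cons.1 hM).2 (fun x hx => hle x (List.mem_cons_of_mem _ hx))

/- ### preceq lemmas -/

lemma sort_insert_top {m : ℕ} {T : Finset (Fin m)} {i : Fin m}
    (h : ∀ x ∈ T, x < i) (hi : i ∉ T) :
    (insert i T).sort (· ≤ ·) = T.sort (· ≤ ·) ++ [i] := by
  refine (fun hp h1 h2 => List.Perm.eq_of_pairwise' (r := (· ≤ ·)) h1 h2 hp) ?_ (Finset.pairwise_sort _ _) ?_
  · exact ((((Finset.sort_perm_toList _ _).trans (Finset.toList_insert hi)).trans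
      (List.Perm.cons _ (Finset.sort_perm_toList _ _).symm)).trans
      (List.perm_append_singleton _ _).symm)
  · refine List.pairwise_append.2 ⟨Finset.pairwise_sort _ _, List.pairwise_singleton _ _, ?_⟩
    intro x hx b hb
    rw [List.mem_singleton] at hb
    subst hb
    exact le_of_lt (h x ((Finset.mem_sort _).1 hx))

lemma preceq_refl {m : ℕ} (S : Finset (Fin m)) : preceq S S :=
  ⟨S, Finset.Subset.refl S, rfl, List.forall₂_same.2 (fun _ _ => le_refl _)⟩

lemma preceq_mono {m : ℕ} {g s t : Finset (Fin m)} (h : preceq g s) (hst : s ⊆ t) :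
    preceq g t := by
  obtain ⟨T', hT', hc, hF⟩ := h
  exact ⟨T', Finset.Subset.trans hT' hst, hc, hF⟩

lemma preceq_insert {m : ℕ} {g s : Finset (Fin m)} {i j : Fin m}
    (h : preceq g s) (hlt : ∀ x ∈ s, x < i) (hi : i ∉ s) (hj : j ≤ i) :
    preceq (insert j g) (insert i s) := by
  by_cases hjg : j ∈ g
  · rw [Finset.insert_eq_self.2 hjg]
    exact preceq_mono h (Finset.subset_insert _ _)
  · obtain ⟨T', hT', hc, hF⟩ := h
    have hiT' : i ∉ T' := fun hmem => hi (hT' hmem)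
    have hltT' : ∀ x ∈ T', x < i := fun x hx => hlt x (hT' hx)
    refine ⟨insert i T', Finset.insert_subset_insert _ hT', ?_, ?_⟩
    · rw [Finset.card_insert_of_notMem hiT', Finset.card_insert_of_notMem hjg, hc]
    · rw [sort_insert_top hltT' hiT']
      have hsort : (insert j g).sort (· ≤ ·) = (g.sort (· ≤ ·)).orderedInsert (· ≤ ·) j := by
        refine (fun hp h1 h2 => List.Perm.eq_of_pairwise' (r := (· ≤ ·)) h1 h2 hp) ?_ (Finset.pairwise_sort _ _)
          (List.Pairwise.orderedInsert _ _ (Finset.pairwise_sort _ _))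
        exact ((((Finset.sort_perm_toList _ _).trans (Finset.toList_insert hjg)).trans
          (List.Perm.cons _ (Finset.sort_perm_toList _ _).symm)).trans
          (List.perm_orderedInsert _ _ _).symm)
      rw [hsort]
      exact forall2_orderedInsert hj (Finset.pairwise_sort _ _) hF
        (fun x hx => le_of_lt (hltT' x ((Finset.mem_sort _).1 hx)))

/- ### Algebraic lemmas -/

lemma rmk_mul {m : ℕ} (P Q : MvPolynomial (Fin m) (ZMod 2)) :
    rmk (P * Q) = rmk P * rmk Q := rfl

lemma rmk_smul {m : ℕ} (r : ZMod 2) (P : MvPolynomial (Fin m) (ZMod 2)) :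
    rmk (C r * P) = r • rmk P := by
  show Ideal.Quotient.mk _ (C r * P) = r • Ideal.Quotient.mk _ P
  rw [map_mul]
  exact (Algebra.smul_def (A := Rring m) r (rmk P)).symm

lemma rmk_X_mul {m : ℕ} (j : Fin m) (g : Finset (Fin m)) :
    rmk (X j * ∏ k ∈ g, (X k : MvPolynomial (Fin m) (ZMod 2))) =
      rmk (∏ k ∈ insert j g, (X k : MvPolynomial (Fin m) (ZMod 2))) := by
  by_cases hjg : j ∈ g
  · rw [Finset.insert_eq_self.2 hjg]
    show Ideal.Quotient.mk _ _ = Ideal.Quotient.mk _ _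
    rw [Ideal.Quotient.eq]
    have h1 : (X j * ∏ k ∈ g, (X k : MvPolynomial (Fin m) (ZMod 2))) - ∏ k ∈ g, X k
        = (X j ^ 2 - X j) * ∏ k ∈ g.erase j, X k := by
      rw [← Finset.mul_prod_erase g _ hjg]
      ring
    rw [h1]
    exact Ideal.mul_mem_right _ _ (Ideal.subset_span ⟨j, rfl⟩)
  · rw [Finset.prod_insert hjg]

/- ### Key span lemma -/

lemma key_span {m : ℕ} (i : Fin m) (s : Finset (Fin m)) (hlt : ∀ x ∈ s, x < i)
    (hi : i ∉ s) (c : Fin m → ZMod 2) (b0 : ZMod 2) :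
    ∀ Q ∈ Submodule.span (ZMod 2)
        { Q : Rring m | ∃ g, preceq g s ∧ Q = rmk (∏ k ∈ g, X k) },
      rmk (X i + (∑ j ∈ Finset.univ.filter (fun j : Fin m => j < i), C (c j) * X j)
          + C b0) * Q ∈
        Submodule.span (ZMod 2)
          { Q : Rring m | ∃ g, preceq g (insert i s) ∧ Q = rmk (∏ k ∈ g, X k) } := by
  intro Q hQ
  induction hQ using Submodule.span_induction with
  | mem x hx =>
    obtain ⟨g, hg, rfl⟩ := hx
    have hgen : ∀ j : Fin m, j ≤ i →
        rmk (X j) * rmk (∏ k ∈ g, (X k : MvPolynomial (Fin m) (ZMod 2))) ∈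
          Submodule.span (ZMod 2)
            { Q : Rring m | ∃ g', preceq g' (insert i s) ∧ Q = rmk (∏ k ∈ g', X k) } := by
      intro j hji
      rw [← rmk_mul, rmk_X_mul]
      exact Submodule.subset_span ⟨insert j g, preceq_insert hg hlt hi hji, rfl⟩
    rw [← rmk_mul]
    have hexp : (X i + (∑ j ∈ Finset.univ.filter (fun j : Fin m => j < i), C (c j) * X j)
          + C b0) * ∏ k ∈ g, (X k : MvPolynomial (Fin m) (ZMod 2))
        = X i * ∏ k ∈ g, X k
          + (∑ j ∈ Finset.univ.filter (fun j : Fin m => j < i),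
              C (c j) * (X j * ∏ k ∈ g, X k))
          + C b0 * ∏ k ∈ g, X k := by
      rw [add_mul, add_mul, Finset.sum_mul]
      simp only [mul_assoc]
    rw [hexp]
    show rmk (_ + _ + _) ∈ _
    have hadd : rmk (X i * ∏ k ∈ g, (X k : MvPolynomial (Fin m) (ZMod 2))
          + (∑ j ∈ Finset.univ.filter (fun j : Fin m => j < i),
              C (c j) * (X j * ∏ k ∈ g, X k))
          + C b0 * ∏ k ∈ g, X k)
        = rmk (X i * ∏ k ∈ g, X k)
          + (∑ j ∈ Finset.univ.filter (fun j : Fin m => j < i),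
              rmk (C (c j) * (X j * ∏ k ∈ g, X k)))
          + rmk (C b0 * ∏ k ∈ g, X k) := by
      show Ideal.Quotient.mk _ _ = _
      rw [map_add, map_add, map_sum]
      rfl
    rw [hadd]
    refine Submodule.add_mem _ (Submodule.add_mem _ ?_ ?_) ?_
    · rw [rmk_mul]
      exact hgen i (le_refl i)
    · refine Submodule.sum_mem _ ?_
      intro j hjmem
      rw [rmk_smul]
      refine Submodule.smul_mem _ _ ?_
      rw [rmk_mul]
      exact hgen j (le_of_lt (Finset.mem_filter.1 hjmem).2)
    · rw [rmk_smul]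
      refine Submodule.smul_mem _ _ ?_
      exact Submodule.subset_span
        ⟨g, preceq_mono hg (Finset.subset_insert _ _), rfl⟩
  | zero => rw [mul_zero]; exact Submodule.zero_mem _
  | add x y _ _ hx hy => rw [mul_add]; exact Submodule.add_mem _ hx hy
  | smul r x _ hx => rw [mul_smul_comm]; exact Submodule.smul_mem _ _ hx

/-- substituting a lower triangular affine change of variables into
a square-free monomial `f` yields, in `R_m`, a linear combination of monomials
`g ⪯ f`; in particular, if `I` is decreasing and `f ∈ I`, the result lies in the
span of the (classes of the) monomials of `I`. -/
theorem ltaSubst_mem_span {m : ℕ} (a : Fin m → Fin m → ZMod 2)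
    (b : Fin m → ZMod 2) (f : Finset (Fin m)) :
    rmk (ltaSubst a b (∏ i ∈ f, X i)) ∈
      Submodule.span (ZMod 2) { Q : Rring m | ∃ g, preceq g f ∧ Q = rmk (∏ i ∈ g, X i) } ∧
    ∀ I : Finset (Finset (Fin m)), Decreasing I → f ∈ I →
      rmk (ltaSubst a b (∏ i ∈ f, X i)) ∈
        Submodule.span (ZMod 2) { Q : Rring m | ∃ g ∈ I, Q = rmk (∏ i ∈ g, X i) } := by
  have part1 : rmk (ltaSubst a b (∏ i ∈ f, X i)) ∈
      Submodule.span (ZMod 2)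
        { Q : Rring m | ∃ g, preceq g f ∧ Q = rmk (∏ i ∈ g, X i) } := by
    induction f using Finset.induction_on_max with
    | empty =>
      apply Submodule.subset_span
      refine ⟨∅, preceq_refl ∅, ?_⟩
      simp [ltaSubst]
    | insert i s hlt ih =>
      have hi : i ∉ s := fun h => lt_irrefl i (hlt i h)
      rw [Finset.prod_insert hi]
      have h1 : ltaSubst a b (X i * ∏ k ∈ s, X k)
          = (X i + (∑ j ∈ Finset.univ.filter (fun j : Fin m => j < i), C (a i j) * X j)
              + C (b i)) * ltaSubst a b (∏ k ∈ s, X k) := by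
        rw [ltaSubst, map_mul, aeval_X]
        rfl
      rw [h1, rmk_mul]
      exact key_span i s hlt hi (a i) (b i) _ ih
  refine ⟨part1, ?_⟩
  intro I hI hfI
  refine Submodule.span_mono ?_ part1
  rintro Q ⟨g, hg, rfl⟩
  exact ⟨g, hI f hfI g hg, rfl⟩
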